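/- Let S be a subring of ℝ, G a subgroup of the positive units of S, and let I be the ideal of S generated by {g - 1 : g ∈ G}, with quotient map π : S → S/I. Let J ⊆ [0,1] be a closed interval with left endpoint η ∈ S, and let g ∈ PL_{S,G}(J). Then for every t ∈ J ∩ S, π(g(t)) = π(t). -/

import Mathlib

/-- An element of PL_{S,G}([η,ζ]): an orientation-preserving piecewise-linear
homeomorphism of [η,ζ] with finitely many breakpoints, breakpoints (and their
images) in the subring S, and all slopes in the subgroup G of positive units. -/
def PLSGHomeo (S : Subring ℝ) (G : Subgroup ℝˣ) (η ζ : ℝ) (f : ℝ → ℝ) : Prop :=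
  f η = η ∧ f ζ = ζ ∧ StrictMonoOn f (Set.Icc η ζ) ∧
  ∃ (n : ℕ) (x : Fin (n + 1) → ℝ), StrictMono x ∧ x 0 = η ∧ x (Fin.last n) = ζ ∧
    (∀ i, x i ∈ S ∧ f (x i) ∈ S) ∧
    ∀ i : Fin n, ∃ g ∈ G, ∀ t ∈ Set.Icc (x i.castSucc) (x i.succ),
      f t = (g : ℝ) * (t - x i.castSucc) + f (x i.castSucc)

/-- Let S be a subring of ℝ, G a subgroup of the positive units of S, and I the
ideal of S generated by {g - 1 : g ∈ G}, with quotient map π : S → S/I. If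
J = [η,ζ] ⊆ [0,1] is a closed interval with left endpoint η ∈ S and
f ∈ PL_{S,G}(J), then π(f t) = π(t) for every t ∈ J ∩ S. -/
theorem stmt17 (S : Subring ℝ) (G : Subgroup ℝˣ)
    (hG : ∀ g ∈ G, (0 : ℝ) < (g : ℝˣ) ∧ ((g : ℝˣ) : ℝ) ∈ S ∧ (((g⁻¹ : ℝˣ)) : ℝ) ∈ S)
    (I : Ideal S) (hI : I = Ideal.span {s : S | ∃ g ∈ G, (s : ℝ) = ((g : ℝˣ) : ℝ) - 1})
    (η ζ : ℝ) (hη : η ∈ S) (hηζ : η ≤ ζ)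
    (hsub : Set.Icc η ζ ⊆ Set.Icc (0 : ℝ) 1)
    (f : ℝ → ℝ) (hf : PLSGHomeo S G η ζ f) :
    ∀ t ∈ Set.Icc η ζ, ∀ ht : t ∈ S,
      ∃ hft : f t ∈ S,
        Ideal.Quotient.mk I ⟨f t, hft⟩ = Ideal.Quotient.mk I ⟨t, ht⟩ := by
  obtain ⟨hfη, hfζ, hmono, n, x, hx, hx0, hxl, hmem, hpiece⟩ := hf
  -- main claim by induction on breakpoint index
  have main : ∀ k : Fin (n + 1), ∀ t ∈ Set.Icc η (x k), ∀ ht : t ∈ S,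
      ∃ hft : f t ∈ S,
        Ideal.Quotient.mk I ⟨f t, hft⟩ = Ideal.Quotient.mk I ⟨t, ht⟩ := by
    intro k
    induction k using Fin.induction with
    | zero =>
        intro t htI ht
        rw [hx0] at htI
        have ht' : t = η := le_antisymm htI.2 htI.1
        subst ht'
        have hfηS : f t ∈ S := by rw [hfη]; exact ht
        refine ⟨hfηS, ?_⟩
        congr 1
        exact Subtype.ext hfη
    | succ k IH =>
        intro t htI ht
        rcases le_or_gt t (x k.castSucc) with hle | hlt
        · exact IH t ⟨htI.1, hle⟩ ht
        · obtain ⟨g, hgG, hform⟩ := hpiece k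
          have hxη : η ≤ x k.castSucc := hx0 ▸ hx.monotone (Fin.zero_le _)
          have hft_eq := hform t ⟨le_of_lt hlt, htI.2⟩
          obtain ⟨hgpos, hgS, _⟩ := hG g hgG
          have hxkS : (x k.castSucc) ∈ S := (hmem k.castSucc).1
          obtain ⟨hfxk, hIH⟩ := IH (x k.castSucc) ⟨hxη, le_refl _⟩ hxkS
          have hft : f t ∈ S := by
            rw [hft_eq]
            exact S.add_mem (S.mul_mem hgS (S.sub_mem ht hxkS)) hfxk
          refine ⟨hft, ?_⟩
          rw [Ideal.Quotient.eq]
          have key : (⟨f t, hft⟩ - ⟨t, ht⟩ : S)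
              = (⟨(g : ℝˣ), hgS⟩ - 1) * (⟨t, ht⟩ - ⟨x k.castSucc, hxkS⟩)
                + (⟨f (x k.castSucc), hfxk⟩ - ⟨x k.castSucc, hxkS⟩) := by
            ext
            push_cast
            rw [hft_eq]
            ring
          rw [key]
          refine I.add_mem (I.mul_mem_right _ ?_) (Ideal.Quotient.eq.mp hIH)
          rw [hI]
          exact Ideal.subset_span ⟨g, hgG, by push_cast; ring⟩
  intro t htI ht
  exact main (Fin.last n) t (hxl ▸ htI) ht
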